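/- arXiv:1808.05419 — 3 statements merged into one kernel-verified Lean document; each statement's English description precedes it below -/
import Mathlib

section
/- The logarithmic mean LM : (0,∞)² → (0,∞) is jointly concave, positively homogeneous (LM(λs, λt) = λ·LM(s,t) for λ > 0), and monotone increasing in each argument. -/
open Real MeasureTheory intervalIntegral

/-- The logarithmic mean: `LM(s,t) = (s - t)/(log s - log t)` for `s ≠ t`, `LM(s,s) = s`. -/
noncomputable def logMean (s t : ℝ) : ℝ :=
  if s = t then s else (s - t) / (Real.log s - Real.log t)

noncomputable def lmF (s t u : ℝ) : ℝ := Real.exp (u * Real.log s + (1 - u) * Real.log t)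

lemma lmF_cont (s t : ℝ) : Continuous (lmF s t) := by
  unfold lmF; fun_prop

lemma lmF_eq (s t u : ℝ) (hs : 0 < s) (ht : 0 < t) :
    lmF s t u = s ^ u * t ^ (1 - u) := by
  rw [lmF, Real.rpow_def_of_pos hs, Real.rpow_def_of_pos ht, ← Real.exp_add]
  congr 1; ring

lemma logMean_eq (s t : ℝ) (hs : 0 < s) (ht : 0 < t) :
    logMean s t = ∫ u in (0:ℝ)..1, lmF s t u := by
  have key : ∀ u : ℝ, lmF s t u = Real.exp ((Real.log s - Real.log t) * u) * t := by
    intro u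
    rw [lmF, show u * Real.log s + (1 - u) * Real.log t
      = (Real.log s - Real.log t) * u + Real.log t by ring, Real.exp_add, Real.exp_log ht]
  set a := Real.log s - Real.log t with ha
  simp only [key]
  rw [intervalIntegral.integral_mul_const]
  by_cases h : s = t
  · subst h
    have : a = 0 := by simp [ha]
    simp [this, logMean]
  · have hane : a ≠ 0 := by
      intro h0
      exact h (Real.log_injOn_pos (Set.mem_Ioi.2 hs) (Set.mem_Ioi.2 ht) (by linarith [sub_eq_zero.1 h0]))
    have : (∫ u in (0:ℝ)..1, Real.exp (a * u)) = a⁻¹ * (Real.exp a - 1) := by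
      rw [intervalIntegral.integral_comp_mul_left (fun x => Real.exp x) hane]
      simp [integral_exp]
    rw [this]
    have hexp : Real.exp a = s / t := by
      rw [ha, Real.exp_sub, Real.exp_log hs, Real.exp_log ht]
    rw [hexp, logMean, if_neg h, ← ha]
    field_simp

lemma lmF_integrable (s t : ℝ) : IntervalIntegrable (lmF s t) volume 0 1 :=
  (lmF_cont s t).intervalIntegrable _ _

lemma lm_aux (u : ℝ) (hu0 : 0 ≤ u) (hu1 : u ≤ 1) {a s t S T : ℝ}
    (ha : 0 < a) (hs : 0 < s) (ht : 0 < t) (hS : 0 < S) (hT : 0 < T) :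
    a * (s ^ u * t ^ (1 - u)) ≤
      S ^ u * T ^ (1 - u) * (u * (a * s / S) + (1 - u) * (a * t / T)) := by
  have haa : a ^ u * a ^ (1 - u) = a := by
    rw [← Real.rpow_add ha]; simp
  have key : a * (s ^ u * t ^ (1 - u))
      = S ^ u * T ^ (1 - u) * ((a * s / S) ^ u * (a * t / T) ^ (1 - u)) := by
    rw [Real.div_rpow (by positivity) hS.le, Real.div_rpow (by positivity) hT.le,
      Real.mul_rpow ha.le hs.le, Real.mul_rpow ha.le ht.le]
    have h1 : S ^ u ≠ 0 := by positivity
    have h2 : T ^ (1 - u) ≠ 0 := by positivity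
    field_simp
    linear_combination (-1 : ℝ) * haa
  rw [key]
  exact mul_le_mul_of_nonneg_left
    (Real.geom_mean_le_arith_mean2_weighted hu0 (by linarith) (by positivity)
      (by positivity) (by ring)) (by positivity)

lemma lmF_concave (u : ℝ) (hu0 : 0 ≤ u) (hu1 : u ≤ 1) {s t s' t' a b : ℝ}
    (hs : 0 < s) (ht : 0 < t) (hs' : 0 < s') (ht' : 0 < t')
    (ha : 0 ≤ a) (hb : 0 ≤ b) (hab : a + b = 1) :
    a * (s ^ u * t ^ (1 - u)) + b * (s' ^ u * t' ^ (1 - u)) ≤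
      (a * s + b * s') ^ u * (a * t + b * t') ^ (1 - u) := by
  rcases eq_or_lt_of_le ha with rfl | hapos
  · have hb1 : b = 1 := by linarith
    subst hb1; simp
  rcases eq_or_lt_of_le hb with rfl | hbpos
  · have ha1 : a = 1 := by linarith
    subst ha1; simp
  have hS : 0 < a * s + b * s' := by positivity
  have hT : 0 < a * t + b * t' := by positivity
  have h1 := lm_aux u hu0 hu1 hapos hs ht hS hT
  have h2 := lm_aux u hu0 hu1 hbpos hs' ht' hS hT
  calc a * (s ^ u * t ^ (1 - u)) + b * (s' ^ u * t' ^ (1 - u))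
      ≤ (a * s + b * s') ^ u * (a * t + b * t') ^ (1 - u) *
          (u * (a * s / (a * s + b * s')) + (1 - u) * (a * t / (a * t + b * t'))) +
        (a * s + b * s') ^ u * (a * t + b * t') ^ (1 - u) *
          (u * (b * s' / (a * s + b * s')) + (1 - u) * (b * t' / (a * t + b * t'))) :=
      add_le_add h1 h2
    _ = (a * s + b * s') ^ u * (a * t + b * t') ^ (1 - u) *
          (u * ((a * s + b * s') / (a * s + b * s')) +
           (1 - u) * ((a * t + b * t') / (a * t + b * t'))) := by ring
    _ = (a * s + b * s') ^ u * (a * t + b * t') ^ (1 - u) := by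
        rw [div_self hS.ne', div_self hT.ne']; ring

theorem stmt_3 :
    ConcaveOn ℝ (Set.Ioi (0:ℝ) ×ˢ Set.Ioi (0:ℝ)) (fun p : ℝ × ℝ => logMean p.1 p.2) ∧
    (∀ lam s t : ℝ, 0 < lam → 0 < s → 0 < t →
      logMean (lam * s) (lam * t) = lam * logMean s t) ∧
    (∀ s s' t : ℝ, 0 < s → s ≤ s' → 0 < t → logMean s t ≤ logMean s' t) ∧
    (∀ s t t' : ℝ, 0 < s → 0 < t → t ≤ t' → logMean s t ≤ logMean s t') := by
  have hlog_ne : ∀ {s t : ℝ}, 0 < s → 0 < t → s ≠ t → Real.log s - Real.log t ≠ 0 := by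
    intro s t hs ht h h0
    exact h (Real.log_injOn_pos (Set.mem_Ioi.2 hs) (Set.mem_Ioi.2 ht)
      (by linarith [sub_eq_zero.1 h0]))
  refine ⟨⟨(convex_Ioi 0).prod (convex_Ioi 0), ?_⟩, ?_, ?_, ?_⟩
  · intro p hp q hq a b ha hb hab
    have hmem := ((convex_Ioi 0).prod (convex_Ioi 0)) hp hq ha hb hab
    simp only [Set.mem_prod, Set.mem_Ioi, Prod.fst_add, Prod.snd_add, Prod.smul_fst,
      Prod.smul_snd, smul_eq_mul] at hp hq hmem ⊢
    rw [logMean_eq _ _ hp.1 hp.2, logMean_eq _ _ hq.1 hq.2, logMean_eq _ _ hmem.1 hmem.2,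
      ← intervalIntegral.integral_const_mul, ← intervalIntegral.integral_const_mul,
      ← intervalIntegral.integral_add ((lmF_integrable _ _).const_mul a)
        ((lmF_integrable _ _).const_mul b)]
    apply intervalIntegral.integral_mono_on zero_le_one
      (((lmF_integrable _ _).const_mul a).add ((lmF_integrable _ _).const_mul b))
      (lmF_integrable _ _)
    intro u hu
    rw [lmF_eq _ _ _ hp.1 hp.2, lmF_eq _ _ _ hq.1 hq.2, lmF_eq _ _ _ hmem.1 hmem.2]
    exact lmF_concave u hu.1 hu.2 hp.1 hp.2 hq.1 hq.2 ha hb hab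
  · intro lam s t hl hs ht
    by_cases h : s = t
    · subst h; simp [logMean]
    · have h' : lam * s ≠ lam * t := fun hh => h (mul_left_cancel₀ hl.ne' hh)
      have hne := hlog_ne hs ht h
      rw [logMean, logMean, if_neg h, if_neg h', Real.log_mul hl.ne' hs.ne',
        Real.log_mul hl.ne' ht.ne']
      rw [show Real.log lam + Real.log s - (Real.log lam + Real.log t)
        = Real.log s - Real.log t by ring]
      field_simp
  · intro s s' t hs hss' ht
    have hs' : 0 < s' := lt_of_lt_of_le hs hss'
    rw [logMean_eq s t hs ht, logMean_eq s' t hs' ht]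
    apply intervalIntegral.integral_mono_on zero_le_one (lmF_integrable s t)
      (lmF_integrable s' t)
    intro u hu
    rw [lmF_eq _ _ _ hs ht, lmF_eq _ _ _ hs' ht]
    exact mul_le_mul_of_nonneg_right (Real.rpow_le_rpow hs.le hss' hu.1)
      (Real.rpow_nonneg ht.le _)
  · intro s t t' hs ht htt'
    have ht' : 0 < t' := lt_of_lt_of_le ht htt'
    rw [logMean_eq s t hs ht, logMean_eq s t' hs ht']
    apply intervalIntegral.integral_mono_on zero_le_one (lmF_integrable s t)
      (lmF_integrable s t')
    intro u hu
    rw [lmF_eq _ _ _ hs ht, lmF_eq _ _ _ hs ht']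
    exact mul_le_mul_of_nonneg_left (Real.rpow_le_rpow ht.le htt' (by linarith [hu.2]))
      (Real.rpow_nonneg hs.le _)
end

section
/- Talagrand from log-Sobolev along the flow (scalar form): let E : [0,∞) → [0,∞) be absolutely continuous, nonincreasing, with E'(t) = -I(t) a.e. and E(t) ≤ I(t)/(2K) a.e. for some K > 0, and with E(t) → 0 as t → ∞. Then ∫₀^∞ I(t)^{1/2} dt ≤ (2/K)^{1/2} E(0)^{1/2}. -/
open MeasureTheory Set Topology Filter

lemma step_ineq (ε b n c x y M : ℝ) (hε : 0 < ε) (hn : 0 < n)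
    (hx : 0 ≤ x) (hxy : x ≤ y) (hyM : y ≤ M) (hMb : M ≤ b) (hMx : M ≤ x + b / n)
    (hcb : b + ε ≤ c) :
    (y - x) / Real.sqrt (c - M) ≤
      2 * Real.sqrt (1 + b / (n * ε)) * (Real.sqrt (c - x) - Real.sqrt (c - y)) := by
  have hb0 : 0 ≤ b := le_trans (le_trans (le_trans hx hxy) hyM) hMb
  have hcM : ε ≤ c - M := by linarith
  have hcy : ε ≤ c - y := by linarith
  have hcx : ε ≤ c - x := by linarith
  have hSx : 0 < Real.sqrt (c - x) := Real.sqrt_pos.2 (by linarith)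
  have hSy : 0 ≤ Real.sqrt (c - y) := Real.sqrt_nonneg _
  have hSM : 0 < Real.sqrt (c - M) := Real.sqrt_pos.2 (by linarith)
  have h1 : Real.sqrt (c - x) - Real.sqrt (c - y) = (y - x) / (Real.sqrt (c - x) + Real.sqrt (c - y)) := by
    rw [eq_div_iff (by positivity)]
    have := Real.sq_sqrt (by linarith : (0:ℝ) ≤ c - x)
    have := Real.sq_sqrt (by linarith : (0:ℝ) ≤ c - y)
    nlinarith
  rw [h1]
  have hkey : Real.sqrt (c - x) ≤ Real.sqrt (1 + b / (n * ε)) * Real.sqrt (c - M) := by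
    rw [← Real.sqrt_mul (by positivity)]
    apply Real.sqrt_le_sqrt
    have h4 : (1 + b / (n * ε)) * (c - M) = (c - M) + (b / n) * ((c - M)/ε) := by
      field_simp
    rw [h4]
    have h2 : 1 ≤ (c - M)/ε := (one_le_div hε).2 hcM
    have h3 : b / n ≤ (b/n) * ((c-M)/ε) := le_mul_of_one_le_right (by positivity) h2
    linarith
  have hsum : Real.sqrt (c - x) + Real.sqrt (c - y) ≤ 2 * Real.sqrt (1 + b / (n * ε)) * Real.sqrt (c - M) := by
    have : Real.sqrt (c - y) ≤ Real.sqrt (c - x) := Real.sqrt_le_sqrt (by linarith)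
    nlinarith
  rw [div_le_iff₀ hSM]
  set S := Real.sqrt (c - x) + Real.sqrt (c - y) with hS
  have hSpos : 0 < S := by positivity
  have heq : Real.sqrt (c - M) * (2 * Real.sqrt (1 + b / (n * ε)) * ((y - x) / S))
      = (y - x) * ((2 * Real.sqrt (1 + b / (n * ε)) * Real.sqrt (c - M)) / S) := by ring
  rw [show 2 * Real.sqrt (1 + b / (n * ε)) * ((y - x) / S) * Real.sqrt (c - M)
      = (y - x) * ((2 * Real.sqrt (1 + b / (n * ε)) * Real.sqrt (c - M)) / S) by ring]
  have hq : 1 ≤ (2 * Real.sqrt (1 + b / (n * ε)) * Real.sqrt (c - M)) / S :=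
    (one_le_div hSpos).2 hsum
  nlinarith [sub_nonneg.2 hxy]

set_option maxHeartbeats 2000000 in
lemma core_bound (K : ℝ) (hK : 0 < K) (E I : ℝ → ℝ)
    (hE0 : ∀ t, 0 ≤ t → 0 ≤ E t) (hI0 : ∀ t, 0 ≤ t → 0 ≤ I t)
    (hint : ∀ t, 0 ≤ t → IntegrableOn I (Set.Icc 0 t))
    (hrep : ∀ t, 0 ≤ t → E t = E 0 - ∫ r in (0:ℝ)..t, I r)
    (hLSI : ∀ᵐ t ∂(volume.restrict (Set.Ici (0:ℝ))), E t ≤ I t / (2 * K))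
    (T : ℝ) (hT : 0 ≤ T) (ε : ℝ) (hε : 0 < ε) (n : ℕ) (hn : 0 < n) :
    ∫ t in (0:ℝ)..T, Real.sqrt (I t) ≤
      Real.sqrt (2 / K) * Real.sqrt (1 + E 0 / (n * ε)) * Real.sqrt (E 0 + ε)
        + Real.sqrt (2 * K) * Real.sqrt ε * T := by
  have hnR : (0:ℝ) < n := Nat.cast_pos.2 hn
  set F : ℝ → ℝ := fun t => ∫ r in (0:ℝ)..t, I r with hF
  have hIntON : IntegrableOn I (Icc 0 T) := hint T hT
  have hII : ∀ s t, 0 ≤ s → s ≤ t → t ≤ T → IntervalIntegrable I volume s t := by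
    intro s t h0 hst htT
    rw [intervalIntegrable_iff_integrableOn_Ioc_of_le hst]
    exact hIntON.mono_set (fun x hx => ⟨le_trans h0 hx.1.le, le_trans hx.2 htT⟩)
  have hFc : ContinuousOn F (Icc 0 T) := by
    have h := intervalIntegral.continuousOn_primitive_interval (μ := volume) (a := 0) (b := T)
      (by rwa [uIcc_of_le hT])
    rwa [uIcc_of_le hT] at h
  have hFsub : ∀ s t, 0 ≤ s → s ≤ t → t ≤ T → F t - F s = ∫ r in s..t, I r := fun s t h0 hst htT =>
    intervalIntegral.integral_interval_sub_left (hII 0 t (le_refl 0) (h0.trans hst) htT)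
      (hII 0 s (le_refl 0) h0 (hst.trans htT))
  have hFmono : ∀ s t, 0 ≤ s → s ≤ t → t ≤ T → F s ≤ F t := by
    intro s t h0 hst htT
    have h := hFsub s t h0 hst htT
    have h2 : 0 ≤ ∫ r in s..t, I r :=
      intervalIntegral.integral_nonneg hst (fun x hx => hI0 x (le_trans h0 hx.1))
    linarith
  have hF0 : F 0 = 0 := intervalIntegral.integral_same
  have hFnn : ∀ t ∈ Icc (0:ℝ) T, 0 ≤ F t := fun t ht => by
    have := hFmono 0 t le_rfl ht.1 ht.2; rw [hF0] at this; exact this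
  have hFle : ∀ t ∈ Icc (0:ℝ) T, F t ≤ E 0 := by
    intro t ht
    have h1 := hrep t ht.1
    have h2 := hE0 t ht.1
    rw [h1] at h2; linarith
  set b := F T with hb
  have hb0 : 0 ≤ b := hFnn T ⟨hT, le_rfl⟩
  have hbE : b ≤ E 0 := hFle T ⟨hT, le_rfl⟩
  set c := E 0 + ε with hc
  set u : ℕ → ℝ := fun k => k * (b / n) with hu
  have hu0 : u 0 = 0 := by simp [hu]
  have hun : u n = b := by simp only [hu]; field_simp
  have humono : Monotone u := fun i j h =>
    mul_le_mul_of_nonneg_right (Nat.cast_le.2 h) (by positivity)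
  have hub : ∀ k, k ≤ n → u k ≤ b := fun k hk => hun ▸ humono hk
  have hunn : ∀ k, 0 ≤ u k := fun k => by positivity
  set Sk : ℕ → Set ℝ := fun k => Icc 0 T ∩ F ⁻¹' (Iic (u k)) with hSk
  set t_ : ℕ → ℝ := fun k => sSup (Sk k) with ht_
  have hSclosed : ∀ k, IsClosed (Sk k) := fun k =>
    hFc.preimage_isClosed_of_isClosed isClosed_Icc isClosed_Iic
  have hS0 : ∀ k, (0:ℝ) ∈ Sk k := fun k => ⟨⟨le_rfl, hT⟩, by simp [mem_preimage, hF0, hunn k]⟩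
  have hSbdd : ∀ k, BddAbove (Sk k) := fun k => (bddAbove_Icc).mono inter_subset_left
  have htmem : ∀ k, t_ k ∈ Sk k := fun k => (hSclosed k).csSup_mem ⟨0, hS0 k⟩ (hSbdd k)
  have ht01 : ∀ k, t_ k ∈ Icc (0:ℝ) T := fun k => (htmem k).1
  have htF : ∀ k, F (t_ k) ≤ u k := fun k => (htmem k).2
  have htmono : ∀ j k, j ≤ k → t_ j ≤ t_ k := fun j k h =>
    csSup_le_csSup (hSbdd k) ⟨0, hS0 j⟩ (fun x hx => ⟨hx.1, le_trans hx.2 (humono h)⟩)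
  have htgt : ∀ k s, t_ k < s → s ≤ T → u k < F s := by
    intro k s hlt hsT
    by_contra hcon
    push_neg at hcon
    have hmem : s ∈ Sk k := ⟨⟨le_trans (ht01 k).1 hlt.le, hsT⟩, hcon⟩
    exact absurd (le_csSup (hSbdd k) hmem) (not_le.2 hlt)
  have hFt : ∀ k, k ≤ n → F (t_ k) = min (u k) b := by
    intro k hk
    refine le_antisymm (le_min (htF k) (hFmono (t_ k) T (ht01 k).1 (ht01 k).2 le_rfl)) ?_
    rcases eq_or_lt_of_le (ht01 k).2 with hTeq | hlt
    · rw [hTeq]; exact min_le_right _ _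
    · refine le_trans (min_le_left _ _) ?_
      have hne : (𝓝[Ioc (t_ k) T] (t_ k)).NeBot := left_nhdsWithin_Ioc_neBot hlt
      have htd : Filter.Tendsto F (𝓝[Ioc (t_ k) T] (t_ k)) (𝓝 (F (t_ k))) :=
        ((hFc (t_ k) (ht01 k)).mono
          (fun x hx => ⟨le_trans (ht01 k).1 hx.1.le, hx.2⟩)).tendsto
      exact ge_of_tendsto htd (Filter.eventually_of_mem self_mem_nhdsWithin
        (fun s hs => (htgt k s hs.1 hs.2).le))
  have htn : t_ n = T := by
    refine le_antisymm (ht01 n).2 (le_csSup (hSbdd n) ⟨⟨hT, le_rfl⟩, ?_⟩)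
    simp [mem_preimage, hun]
    exact le_rfl
  set s_ : ℕ → ℝ := fun k => if k = 0 then 0 else t_ (k - 1) with hs_
  have hs0 : s_ 0 = 0 := rfl
  have hssucc : ∀ k, s_ (k + 1) = t_ k := fun k => by simp [hs_]
  have hsmem : ∀ k, s_ k ∈ Icc (0:ℝ) T := by
    intro k
    cases k with
    | zero => exact ⟨le_rfl, hT⟩
    | succ m => rw [hssucc]; exact ht01 m
  have hsmono : ∀ k, s_ k ≤ s_ (k + 1) := by
    intro k
    cases k with
    | zero => rw [hs0, hssucc]; exact (ht01 0).1
    | succ m => rw [hssucc, hssucc]; exact htmono m (m + 1) (Nat.le_succ m)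
  have hslast : s_ (n + 1) = T := by rw [hssucc, htn]
  have hsFb : ∀ k, k ≤ n → ∀ t ∈ Icc (s_ k) (s_ (k + 1)), F t ≤ u k := by
    intro k hk t ht
    have h0 : 0 ≤ t := le_trans (hsmem k).1 ht.1
    have h1 : F t ≤ F (t_ k) := by
      refine hFmono t (t_ k) h0 ?_ (ht01 k).2
      rw [← hssucc]; exact ht.2
    exact le_trans h1 (htF k)
  -- lower bound on c - F t
  have hGlb : ∀ t ∈ Icc (0:ℝ) T, ε ≤ c - F t := by
    intro t ht; have := hFle t ht; rw [hc]; linarith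
  have hsqG_ne : ∀ t ∈ Icc (0:ℝ) T, Real.sqrt (c - F t) ≠ 0 := by
    intro t ht
    exact ne_of_gt (Real.sqrt_pos.2 (lt_of_lt_of_le hε (hGlb t ht)))
  have hGcont : ContinuousOn (fun t => (Real.sqrt (c - F t))⁻¹) (Icc 0 T) :=
    ((continuousOn_const.sub hFc).sqrt).inv₀ hsqG_ne
  -- integrands
  set h1 : ℝ → ℝ := fun t => I t * (Real.sqrt (c - F t))⁻¹ with hh1
  set h2 : ℝ → ℝ := fun t => (Real.sqrt (c - F t))⁻¹ with hh2
  have hH1int : ∀ s t, 0 ≤ s → s ≤ t → t ≤ T → IntervalIntegrable h1 volume s t := by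
    intro s t h0 hst htT
    refine (hII s t h0 hst htT).mul_continuousOn (hGcont.mono ?_)
    rw [uIcc_of_le hst]
    exact fun x hx => ⟨le_trans h0 hx.1, le_trans hx.2 htT⟩
  have hH2int : ∀ s t, 0 ≤ s → s ≤ t → t ≤ T → IntervalIntegrable h2 volume s t := by
    intro s t h0 hst htT
    refine (hGcont.mono ?_).intervalIntegrable
    rw [uIcc_of_le hst]
    exact fun x hx => ⟨le_trans h0 hx.1, le_trans hx.2 htT⟩
  have hsqI_int : IntervalIntegrable (fun t => Real.sqrt (I t)) volume 0 T := by
    rw [intervalIntegrable_iff_integrableOn_Ioc_of_le hT]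
    have hmeas : AEStronglyMeasurable (fun t => Real.sqrt (I t))
        (volume.restrict (Ioc (0:ℝ) T)) :=
      Real.continuous_sqrt.comp_aestronglyMeasurable
        ((hIntON.mono_set Ioc_subset_Icc_self).aestronglyMeasurable)
    refine Integrable.mono ((integrable_const 1).add
      (hIntON.mono_set Ioc_subset_Icc_self)) hmeas ?_
    filter_upwards [ae_restrict_mem measurableSet_Ioc] with t ht
    have hI := hI0 t ht.1.le
    simp only [Pi.add_apply]
    rw [Real.norm_eq_abs, Real.norm_eq_abs, abs_of_nonneg (Real.sqrt_nonneg _),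
      abs_of_nonneg (by linarith : (0:ℝ) ≤ 1 + I t)]
    nlinarith [Real.sq_sqrt hI, Real.sqrt_nonneg (I t)]
  -- pointwise comparison
  have h2Kpos : (0:ℝ) < 2 * K := by linarith
  have hsq2K : Real.sqrt (2 * K) ≠ 0 := ne_of_gt (Real.sqrt_pos.2 h2Kpos)
  have hsqε : Real.sqrt ε ≠ 0 := ne_of_gt (Real.sqrt_pos.2 hε)
  set C2 : ℝ := 2 * K * ε * (Real.sqrt (2 * K))⁻¹ with hC2
  have hC2nn : 0 ≤ C2 := by positivity
  have hintsum : IntervalIntegrable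
      (fun t => (Real.sqrt (2 * K))⁻¹ * h1 t + C2 * h2 t) volume 0 T :=
    ((hH1int 0 T le_rfl hT le_rfl).const_mul _).add ((hH2int 0 T le_rfl hT le_rfl).const_mul _)
  have main1 : ∫ t in (0:ℝ)..T, Real.sqrt (I t) ≤
      ∫ t in (0:ℝ)..T, ((Real.sqrt (2 * K))⁻¹ * h1 t + C2 * h2 t) := by
    refine intervalIntegral.integral_mono_ae_restrict hT hsqI_int hintsum ?_
    have hLSI' : ∀ᵐ t ∂(volume.restrict (Icc (0:ℝ) T)), E t ≤ I t / (2 * K) :=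
      ae_restrict_of_ae_restrict_of_subset (fun x hx => hx.1) hLSI
    filter_upwards [hLSI', ae_restrict_mem measurableSet_Icc] with t hLS ht
    have hEt : 0 ≤ E t := hE0 t ht.1
    have hA : 0 ≤ I t := hI0 t ht.1
    have hEF : E t + ε = c - F t := by rw [hrep t ht.1, hc]; ring
    have h2KE : 2 * K * E t ≤ I t := by
      rw [le_div_iff₀ h2Kpos] at hLS
      linarith [hLS]
    have hstep1 : Real.sqrt (I t) ≤ Real.sqrt (I t + 2 * K * ε) :=
      Real.sqrt_le_sqrt (by nlinarith)
    have hden : Real.sqrt (2 * K * (E t + ε)) ≤ Real.sqrt (I t + 2 * K * ε) :=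
      Real.sqrt_le_sqrt (by nlinarith)
    have hdpos : 0 < Real.sqrt (2 * K * (E t + ε)) := Real.sqrt_pos.2 (by positivity)
    have key : Real.sqrt (I t) ≤ (I t + 2 * K * ε) / Real.sqrt (2 * K * (E t + ε)) := by
      calc Real.sqrt (I t) ≤ Real.sqrt (I t + 2 * K * ε) := hstep1
        _ = (I t + 2 * K * ε) / Real.sqrt (I t + 2 * K * ε) := (Real.div_sqrt).symm
        _ ≤ (I t + 2 * K * ε) / Real.sqrt (2 * K * (E t + ε)) := by
            gcongr
    rw [Real.sqrt_mul h2Kpos.le, hEF] at key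
    have hGne : Real.sqrt (c - F t) ≠ 0 := hsqG_ne t ht
    have heq : (I t + 2 * K * ε) / (Real.sqrt (2 * K) * Real.sqrt (c - F t)) =
        (Real.sqrt (2 * K))⁻¹ * h1 t + C2 * h2 t := by
      rw [hh1, hh2, hC2]
      field_simp
    rw [heq] at key
    exact key
  have main2 : ∫ t in (0:ℝ)..T, ((Real.sqrt (2 * K))⁻¹ * h1 t + C2 * h2 t) =
      (Real.sqrt (2 * K))⁻¹ * (∫ t in (0:ℝ)..T, h1 t) + C2 * ∫ t in (0:ℝ)..T, h2 t := by
    rw [intervalIntegral.integral_add ((hH1int 0 T le_rfl hT le_rfl).const_mul _)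
      ((hH2int 0 T le_rfl hT le_rfl).const_mul _), intervalIntegral.integral_const_mul,
      intervalIntegral.integral_const_mul]
  -- bound on ∫ h2
  have hInt2 : ∫ t in (0:ℝ)..T, h2 t ≤ T * (Real.sqrt ε)⁻¹ := by
    have hmon := intervalIntegral.integral_mono_on hT (hH2int 0 T le_rfl hT le_rfl)
      (intervalIntegrable_const (c := (Real.sqrt ε)⁻¹)) (fun t ht => by
        rw [hh2]
        refine inv_anti₀ (Real.sqrt_pos.2 hε) (Real.sqrt_le_sqrt (hGlb t ht)))
    rw [intervalIntegral.integral_const, smul_eq_mul, sub_zero] at hmon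
    exact hmon
  -- bound on ∫ h1
  have piece : ∀ k, k ≤ n → ∫ t in (s_ k)..(s_ (k + 1)), h1 t ≤
      (F (s_ (k + 1)) - F (s_ k)) * (Real.sqrt (c - u k))⁻¹ := by
    intro k hk
    have hcu : (0:ℝ) < c - u k := by
      have := hub k hk; rw [hc]; linarith
    have hmon := intervalIntegral.integral_mono_on (hsmono k)
      (hH1int _ _ (hsmem k).1 (hsmono k) (hsmem (k + 1)).2)
      ((hII _ _ (hsmem k).1 (hsmono k) (hsmem (k + 1)).2).mul_const ((Real.sqrt (c - u k))⁻¹))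
      (fun t ht => by
        have htI : t ∈ Icc (0:ℝ) T := ⟨le_trans (hsmem k).1 ht.1, le_trans ht.2 (hsmem (k + 1)).2⟩
        have hFu : F t ≤ u k := hsFb k hk t ht
        rw [hh1]
        refine mul_le_mul_of_nonneg_left ?_ (hI0 t htI.1)
        exact inv_anti₀ (Real.sqrt_pos.2 hcu) (Real.sqrt_le_sqrt (by linarith)))
    calc ∫ t in (s_ k)..(s_ (k + 1)), h1 t
        ≤ ∫ t in (s_ k)..(s_ (k + 1)), I t * (Real.sqrt (c - u k))⁻¹ := hmon
      _ = (∫ t in (s_ k)..(s_ (k + 1)), I t) * (Real.sqrt (c - u k))⁻¹ :=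
          intervalIntegral.integral_mul_const _ _
      _ = (F (s_ (k + 1)) - F (s_ k)) * (Real.sqrt (c - u k))⁻¹ := by
          rw [hFsub _ _ (hsmem k).1 (hsmono k) (hsmem (k + 1)).2]
  have hsplit : ∫ t in (0:ℝ)..T, h1 t =
      ∑ k ∈ Finset.range (n + 1), ∫ t in (s_ k)..(s_ (k + 1)), h1 t := by
    have h := intervalIntegral.sum_integral_adjacent_intervals (a := s_) (n := n + 1)
      (fun k _ => hH1int (s_ k) (s_ (k + 1)) (hsmem k).1 (hsmono k) (hsmem (k + 1)).2)
    rw [hs0, hslast] at h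
    exact h.symm
  set R : ℝ := Real.sqrt (1 + b / (n * ε)) with hR
  have hRnn : 0 ≤ R := Real.sqrt_nonneg _
  set g : ℕ → ℝ := fun j => Real.sqrt (c - min (u j) b) with hg
  have hterm : ∀ i, i < n → (F (s_ (i + 1 + 1)) - F (s_ (i + 1))) * (Real.sqrt (c - u (i + 1)))⁻¹
      ≤ 2 * R * (g i - g (i + 1)) := by
    intro i hi
    have h1n : i + 1 ≤ n := hi
    have hin : i ≤ n := le_of_lt hi
    rw [hssucc, hssucc, hFt (i + 1) h1n, hFt i hin, ← div_eq_mul_inv]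
    refine step_ineq ε b (n : ℝ) c (min (u i) b) (min (u (i + 1)) b) (u (i + 1)) hε hnR
      (le_min (hunn i) hb0) (min_le_min (humono (Nat.le_succ i)) le_rfl) (min_le_left _ _)
      (hub (i + 1) h1n) ?_ (by rw [hc]; linarith)
    rcases le_total (u i) b with hcase | hcase
    · rw [min_eq_left hcase]
      have : u (i + 1) = u i + b / n := by
        rw [hu]; push_cast; ring
      rw [this]
    · rw [min_eq_right hcase]
      have hbn : 0 ≤ b / (n:ℝ) := by positivity
      have := hub (i + 1) h1n
      linarith
  have hInt1 : ∫ t in (0:ℝ)..T, h1 t ≤ 2 * R * Real.sqrt c := by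
    rw [hsplit]
    calc ∑ k ∈ Finset.range (n + 1), ∫ t in (s_ k)..(s_ (k + 1)), h1 t
        ≤ ∑ k ∈ Finset.range (n + 1), (F (s_ (k + 1)) - F (s_ k)) * (Real.sqrt (c - u k))⁻¹ :=
          Finset.sum_le_sum (fun k hk => piece k (Nat.lt_succ_iff.1 (Finset.mem_range.1 hk)))
      _ = (∑ i ∈ Finset.range n, (F (s_ (i + 1 + 1)) - F (s_ (i + 1))) * (Real.sqrt (c - u (i + 1)))⁻¹)
            + (F (s_ (0 + 1)) - F (s_ 0)) * (Real.sqrt (c - u 0))⁻¹ :=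
          Finset.sum_range_succ' _ n
      _ ≤ (∑ i ∈ Finset.range n, 2 * R * (g i - g (i + 1))) + 0 := by
          refine add_le_add (Finset.sum_le_sum (fun i hi => hterm i (Finset.mem_range.1 hi))) ?_
          rw [hssucc, hFt 0 (Nat.zero_le n), hu0, min_eq_left hb0, hs0, hF0]
          simp
      _ = 2 * R * (g 0 - g n) + 0 := by rw [← Finset.mul_sum, Finset.sum_range_sub' g n]
      _ ≤ 2 * R * Real.sqrt c := by
          have hg0 : g 0 = Real.sqrt c := by
            rw [hg]; simp only; rw [hu0, min_eq_left hb0, sub_zero]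
          have hgn : g n = Real.sqrt (c - b) := by
            rw [hg]; simp only; rw [hun, min_self]
          rw [add_zero, hg0, hgn]
          have h1 : 0 ≤ Real.sqrt (c - b) := Real.sqrt_nonneg _
          nlinarith [Real.sqrt_nonneg c]
  -- final arithmetic
  have hsqrt4 : Real.sqrt (2 / K) * Real.sqrt (2 * K) = 2 := by
    rw [← Real.sqrt_mul (by positivity)]
    rw [show 2 / K * (2 * K) = 4 by field_simp; ring]
    rw [show (4:ℝ) = 2 ^ 2 by norm_num, Real.sqrt_sq (by norm_num)]
  have h2inv : 2 * (Real.sqrt (2 * K))⁻¹ = Real.sqrt (2 / K) := by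
    rw [eq_comm, eq_mul_inv_iff_mul_eq₀ hsq2K]
    exact hsqrt4
  have hfinA : (Real.sqrt (2 * K))⁻¹ * (2 * R * Real.sqrt c) ≤
      Real.sqrt (2 / K) * Real.sqrt (1 + E 0 / (n * ε)) * Real.sqrt (E 0 + ε) := by
    have hRle : R ≤ Real.sqrt (1 + E 0 / (n * ε)) := by
      rw [hR]
      refine Real.sqrt_le_sqrt ?_
      have : b / (n * ε) ≤ E 0 / (n * ε) := by gcongr
      linarith
    calc (Real.sqrt (2 * K))⁻¹ * (2 * R * Real.sqrt c)
        = Real.sqrt (2 / K) * R * Real.sqrt c := by rw [← h2inv]; ring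
      _ ≤ Real.sqrt (2 / K) * Real.sqrt (1 + E 0 / (n * ε)) * Real.sqrt (E 0 + ε) := by
          rw [hc]
          gcongr
  have hfinB : C2 * (T * (Real.sqrt ε)⁻¹) = Real.sqrt (2 * K) * Real.sqrt ε * T := by
    have e1 : 2 * K * (Real.sqrt (2 * K))⁻¹ = Real.sqrt (2 * K) := by
      rw [← div_eq_mul_inv]; exact Real.div_sqrt
    have e2 : ε * (Real.sqrt ε)⁻¹ = Real.sqrt ε := by
      rw [← div_eq_mul_inv]; exact Real.div_sqrt
    calc C2 * (T * (Real.sqrt ε)⁻¹)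
        = (2 * K * (Real.sqrt (2 * K))⁻¹) * (ε * (Real.sqrt ε)⁻¹) * T := by rw [hC2]; ring
      _ = Real.sqrt (2 * K) * Real.sqrt ε * T := by rw [e1, e2]
  calc ∫ t in (0:ℝ)..T, Real.sqrt (I t)
      ≤ (Real.sqrt (2 * K))⁻¹ * (∫ t in (0:ℝ)..T, h1 t) + C2 * ∫ t in (0:ℝ)..T, h2 t := by
        rw [← main2]; exact main1
    _ ≤ (Real.sqrt (2 * K))⁻¹ * (2 * R * Real.sqrt c) + C2 * (T * (Real.sqrt ε)⁻¹) := by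
        refine add_le_add (mul_le_mul_of_nonneg_left hInt1 (by positivity))
          (mul_le_mul_of_nonneg_left hInt2 hC2nn)
    _ ≤ Real.sqrt (2 / K) * Real.sqrt (1 + E 0 / (n * ε)) * Real.sqrt (E 0 + ε)
          + Real.sqrt (2 * K) * Real.sqrt ε * T := by
        rw [hfinB]
        exact add_le_add_left hfinA _

theorem stmt_16 (K : ℝ) (hK : 0 < K) (E I : ℝ → ℝ)
    (hE0 : ∀ t, 0 ≤ t → 0 ≤ E t) (hI0 : ∀ t, 0 ≤ t → 0 ≤ I t)
    (hanti : AntitoneOn E (Set.Ici 0))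
    (hint : ∀ t, 0 ≤ t → IntegrableOn I (Set.Icc 0 t))
    (hrep : ∀ t, 0 ≤ t → E t = E 0 - ∫ r in (0:ℝ)..t, I r)
    (hLSI : ∀ᵐ t ∂(volume.restrict (Set.Ici (0:ℝ))), E t ≤ I t / (2 * K))
    (hlim : Filter.Tendsto E Filter.atTop (nhds 0)) :
    ∫ t in Set.Ioi (0:ℝ), Real.sqrt (I t) ≤ Real.sqrt (2 / K) * Real.sqrt (E 0) := by
  have key : ∀ T : ℝ, 0 ≤ T →
      ∫ t in (0:ℝ)..T, Real.sqrt (I t) ≤ Real.sqrt (2 / K) * Real.sqrt (E 0) := by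
    intro T hT
    set f : ℝ → ℝ := fun x => Real.sqrt (2 / K) * Real.sqrt (1 + E 0 * x) * Real.sqrt (E 0 + x)
      + Real.sqrt (2 * K) * Real.sqrt x * T with hf
    have hcont : Continuous f := by
      apply Continuous.add
      · exact ((continuous_const.mul ((continuous_const.add
          (continuous_const.mul continuous_id)).sqrt)).mul
          ((continuous_const.add continuous_id).sqrt))
      · exact (continuous_const.mul Real.continuous_sqrt).mul continuous_const
    have htend : Filter.Tendsto (fun m : ℕ => f (1 / (m : ℝ))) Filter.atTop (nhds (f 0)) :=
      (hcont.tendsto 0).comp tendsto_one_div_atTop_nhds_zero_nat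
    have hf0 : f 0 = Real.sqrt (2 / K) * Real.sqrt (E 0) := by
      rw [hf]; simp
    have hev : ∀ᶠ m : ℕ in Filter.atTop,
        ∫ t in (0:ℝ)..T, Real.sqrt (I t) ≤ f (1 / (m : ℝ)) := by
      filter_upwards [Filter.eventually_ge_atTop 1] with m hm
      have hm0 : 0 < m := hm
      have hmR : (0:ℝ) < (m : ℝ) := Nat.cast_pos.2 hm0
      have hε : (0:ℝ) < 1 / (m : ℝ) := by positivity
      have hb := core_bound K hK E I hE0 hI0 hint hrep hLSI T hT (1 / (m : ℝ)) hε (m ^ 2)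
        (pow_pos hm0 2)
      have hx : ((m ^ 2 : ℕ) : ℝ) * (1 / (m : ℝ)) = (m : ℝ) := by
        push_cast
        field_simp
      rw [hx, div_eq_mul_one_div (E 0) (m : ℝ)] at hb
      exact hb
    have := ge_of_tendsto htend hev
    rwa [hf0] at this
  by_cases hInt : IntegrableOn (fun t => Real.sqrt (I t)) (Set.Ioi (0:ℝ)) volume
  · have htendT := MeasureTheory.intervalIntegral_tendsto_integral_Ioi 0 hInt Filter.tendsto_id
    exact le_of_tendsto htendT
      (by filter_upwards [Filter.eventually_ge_atTop (0:ℝ)] with T hT using key T hT)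
  · rw [MeasureTheory.integral_undef hInt]
    positivity
end

section
/- For a finite measure space (X, μ) and a convex C¹ Lipschitz function f : ℝ → ℝ, if ρ : I → L¹(X, μ) (real-valued) is a differentiable curve (in L¹ norm) then t ↦ ∫ f(ρ_t) dμ is locally absolutely continuous with derivative ∫ f'(ρ_t) ρ̇_t dμ for a.e. t ∈ I. -/
open MeasureTheory Filter Topology

theorem stmt_17 {X : Type*} [MeasurableSpace X] (μ : Measure X) [IsFiniteMeasure μ]
    (f : ℝ → ℝ) (hconv : ConvexOn ℝ Set.univ f) (hC1 : ContDiff ℝ 1 f)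
    (L : NNReal) (hLip : LipschitzWith L f)
    (I : Set ℝ) (hI : I.OrdConnected)
    (ρ ρ' : ℝ → X → ℝ)
    (hint : ∀ t ∈ I, Integrable (ρ t) μ ∧ Integrable (ρ' t) μ)
    (hderiv : ∀ t ∈ I, Filter.Tendsto
      (fun h : ℝ => ∫ x, |(ρ (t + h) x - ρ t x) / h - ρ' t x| ∂μ)
      (nhdsWithin 0 {(0:ℝ)}ᶜ) (nhds 0)) :
    ContinuousOn (fun t => ∫ x, f (ρ t x) ∂μ) I ∧
      ∀ᵐ t ∂(volume.restrict I),
        HasDerivAt (fun u => ∫ x, f (ρ u x) ∂μ) (∫ x, deriv f (ρ t x) * ρ' t x ∂μ) t := by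
  have hfc : Continuous f := hLip.continuous
  have hdf : Differentiable ℝ f := hC1.differentiable one_ne_zero
  have hLabs : ∀ a b : ℝ, |f a - f b| ≤ L * |a - b| := fun a b => by
    simpa [Real.dist_eq] using hLip.dist_le_mul a b
  -- integrability of f ∘ g
  have hcomp : ∀ g : X → ℝ, Integrable g μ → Integrable (fun x => f (g x)) μ := by
    intro g hg
    refine ((integrable_const (|f 0|)).add (hg.abs.const_mul (L : ℝ))).mono'
      (hfc.comp_aestronglyMeasurable hg.1) ?_
    filter_upwards with x
    have h1 := hLabs (g x) 0
    simp only [sub_zero] at h1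
    have h2 : |f (g x)| - |f 0| ≤ |f (g x) - f 0| := abs_sub_abs_le_abs_sub _ _
    show ‖f (g x)‖ ≤ |f 0| + (L : ℝ) * |g x|
    simp only [Real.norm_eq_abs]
    linarith
  -- translation of filters
  have hmap : ∀ (t : ℝ) (s : Set ℝ),
      Filter.map (fun h : ℝ => t + h) (nhdsWithin 0 ((fun h : ℝ => t + h) ⁻¹' s))
        = nhdsWithin t s := by
    intro t s
    rw [nhdsWithin, nhdsWithin, Filter.map_inf (add_right_injective t),
      map_add_left_nhds_zero, Filter.map_principal,
      Set.image_preimage_eq _ (fun y => ⟨y - t, by ring⟩)]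
  -- L¹ continuity of ρ at points of I
  have hL1 : ∀ t ∈ I, Tendsto (fun h : ℝ => ∫ x, |ρ (t + h) x - ρ t x| ∂μ)
      (nhdsWithin 0 ((fun h : ℝ => t + h) ⁻¹' I)) (𝓝 0) := by
    intro t ht
    set s : Set ℝ := (fun h : ℝ => t + h) ⁻¹' I with hs
    have hsub : s ⊆ (s ∩ {(0:ℝ)}ᶜ) ∪ {0} := by
      intro h hh
      by_cases h0 : h = 0
      · exact Or.inr (by simp [h0])
      · exact Or.inl ⟨hh, h0⟩
    refine Filter.Tendsto.mono_left ?_ ((nhdsWithin_mono 0 hsub).trans (le_of_eq (nhdsWithin_union 0 _ _)))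
    rw [tendsto_sup]
    constructor
    · -- on s ∩ {0}ᶜ
      have hbound : Tendsto (fun h : ℝ => |h| *
          ((∫ x, |(ρ (t + h) x - ρ t x) / h - ρ' t x| ∂μ) + ∫ x, |ρ' t x| ∂μ))
          (nhdsWithin 0 (s ∩ {(0:ℝ)}ᶜ)) (𝓝 0) := by
        have h1 : Tendsto (fun h : ℝ => |h|) (nhdsWithin 0 (s ∩ {(0:ℝ)}ᶜ)) (𝓝 0) := by
          have := (continuous_abs.tendsto (0:ℝ)).mono_left (nhdsWithin_le_nhds
            (s := s ∩ {(0:ℝ)}ᶜ))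
          simpa using this
        have h2 : Tendsto (fun h : ℝ => ∫ x, |(ρ (t + h) x - ρ t x) / h - ρ' t x| ∂μ)
            (nhdsWithin 0 (s ∩ {(0:ℝ)}ᶜ)) (𝓝 0) :=
          (hderiv t ht).mono_left (nhdsWithin_mono 0 (Set.inter_subset_right))
        have := h1.mul (h2.add (tendsto_const_nhds (x := ∫ x, |ρ' t x| ∂μ)))
        simpa using this
      refine squeeze_zero' ?_ ?_ hbound
      · filter_upwards with h using integral_nonneg fun x => abs_nonneg _
      · filter_upwards [self_mem_nhdsWithin] with h hh
        obtain ⟨hhs, hh0'⟩ := hh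
        have hh0 : h ≠ 0 := hh0'
        have hthI : t + h ∈ I := hhs
        have hq : Integrable (fun x => (ρ (t + h) x - ρ t x) / h - ρ' t x) μ :=
          (((hint _ hthI).1.sub (hint t ht).1).div_const h).sub (hint t ht).2
        calc ∫ x, |ρ (t + h) x - ρ t x| ∂μ
            ≤ ∫ x, |h| * (|(ρ (t + h) x - ρ t x) / h - ρ' t x| + |ρ' t x|) ∂μ := by
              refine integral_mono ((hint _ hthI).1.sub (hint t ht).1).abs
                ((hq.abs.add (hint t ht).2.abs).const_mul _) ?_
              intro x
              have he : ρ (t + h) x - ρ t x = h * ((ρ (t + h) x - ρ t x) / h) :=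
                (mul_div_cancel₀ _ hh0).symm
              have h3 : |(ρ (t + h) x - ρ t x) / h| ≤
                  |(ρ (t + h) x - ρ t x) / h - ρ' t x| + |ρ' t x| := by
                have := abs_add_le ((ρ (t + h) x - ρ t x) / h - ρ' t x) (ρ' t x)
                simpa using this
              calc |ρ (t + h) x - ρ t x| = |h| * |(ρ (t + h) x - ρ t x) / h| := by
                    rw [abs_div]
                    field_simp
                _ ≤ |h| * (|(ρ (t + h) x - ρ t x) / h - ρ' t x| + |ρ' t x|) :=
                    mul_le_mul_of_nonneg_left h3 (abs_nonneg h)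
          _ = |h| * ((∫ x, |(ρ (t + h) x - ρ t x) / h - ρ' t x| ∂μ) + ∫ x, |ρ' t x| ∂μ) := by
              rw [integral_const_mul, integral_add hq.abs (hint t ht).2.abs]
    · -- on {0}
      rw [nhdsWithin_singleton]
      refine tendsto_pure_left.2 fun u hu => ?_
      simpa using mem_of_mem_nhds hu
  -- continuity of F on I
  have hcontF : ContinuousOn (fun t => ∫ x, f (ρ t x) ∂μ) I := by
    intro t ht
    unfold ContinuousWithinAt
    rw [← hmap t I, tendsto_map'_iff]
    rw [tendsto_iff_dist_tendsto_zero]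
    have hb := (hL1 t ht).const_mul (L : ℝ)
    rw [mul_zero] at hb
    refine squeeze_zero' (Eventually.of_forall fun h => dist_nonneg) ?_ hb
    filter_upwards [self_mem_nhdsWithin] with h hh
    have hthI : t + h ∈ I := hh
    simp only [Function.comp]
    rw [Real.dist_eq, ← integral_sub (hcomp _ (hint _ hthI).1) (hcomp _ (hint t ht).1)]
    calc |∫ x, (f (ρ (t + h) x) - f (ρ t x)) ∂μ|
        ≤ ∫ x, |f (ρ (t + h) x) - f (ρ t x)| ∂μ := by
          simpa [Real.norm_eq_abs] using norm_integral_le_integral_norm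
            (fun x => f (ρ (t + h) x) - f (ρ t x))
      _ ≤ ∫ x, (L : ℝ) * |ρ (t + h) x - ρ t x| ∂μ := by
          refine integral_mono ((hcomp _ (hint _ hthI).1).sub (hcomp _ (hint t ht).1)).abs
            ((((hint _ hthI).1.sub (hint t ht).1).abs.const_mul _)) fun x => hLabs _ _
      _ = (L : ℝ) * ∫ x, |ρ (t + h) x - ρ t x| ∂μ := integral_const_mul _ _
  refine ⟨hcontF, ?_⟩
  -- derivative at interior points
  have hkey : ∀ t ∈ interior I,
      HasDerivAt (fun u => ∫ x, f (ρ u x) ∂μ) (∫ x, deriv f (ρ t x) * ρ' t x ∂μ) t := by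
    intro t ht'
    have ht : t ∈ I := interior_subset ht'
    have hmem : ∀ᶠ h in 𝓝 (0:ℝ), t + h ∈ I := by
      have htend : Tendsto (fun h : ℝ => t + h) (𝓝 0) (𝓝 t) := by
        simpa using (continuous_add_left t).tendsto (0:ℝ)
      have : ∀ᶠ u in 𝓝 t, u ∈ I :=
        eventually_of_mem (mem_interior_iff_mem_nhds.mp ht') fun u hu => hu
      exact htend.eventually this
    rw [hasDerivAt_iff_tendsto_slope_zero]
    have hT1 : Tendsto (fun h : ℝ =>
        ∫ x, (f (ρ (t + h) x) - f (ρ t x + h * ρ' t x)) / h ∂μ) (𝓝[≠] 0) (𝓝 0) := by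
      have hb := (hderiv t ht).const_mul (L : ℝ)
      rw [mul_zero] at hb
      refine squeeze_zero_norm' ?_ hb
      filter_upwards [hmem.filter_mono nhdsWithin_le_nhds, self_mem_nhdsWithin] with h h1 h2
      have hh0 : h ≠ 0 := h2
      have hshift : Integrable (fun x => ρ t x + h * ρ' t x) μ :=
        (hint t ht).1.add ((hint t ht).2.const_mul h)
      have hAint : Integrable (fun x => (f (ρ (t + h) x) - f (ρ t x + h * ρ' t x)) / h) μ :=
        ((hcomp _ (hint _ h1).1).sub (hcomp _ hshift)).div_const h
      have hq : Integrable (fun x => (ρ (t + h) x - ρ t x) / h - ρ' t x) μ :=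
        (((hint _ h1).1.sub (hint t ht).1).div_const h).sub (hint t ht).2
      calc ‖∫ x, (f (ρ (t + h) x) - f (ρ t x + h * ρ' t x)) / h ∂μ‖
          ≤ ∫ x, ‖(f (ρ (t + h) x) - f (ρ t x + h * ρ' t x)) / h‖ ∂μ :=
            norm_integral_le_integral_norm _
        _ ≤ ∫ x, (L : ℝ) * |(ρ (t + h) x - ρ t x) / h - ρ' t x| ∂μ := by
            refine integral_mono hAint.norm (hq.abs.const_mul _) fun x => ?_
            simp only [Real.norm_eq_abs, abs_div]
            rw [div_le_iff₀ (abs_pos.mpr hh0)]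
            have key : (L : ℝ) * |(ρ (t + h) x - ρ t x) / h - ρ' t x| * |h|
                = (L : ℝ) * |ρ (t + h) x - (ρ t x + h * ρ' t x)| := by
              rw [mul_assoc, ← abs_mul]
              congr 2
              field_simp
              ring
            rw [key]
            exact hLabs _ _
        _ = (L : ℝ) * ∫ x, |(ρ (t + h) x - ρ t x) / h - ρ' t x| ∂μ := integral_const_mul _ _
    have hT2 : Tendsto (fun h : ℝ =>
        ∫ x, (f (ρ t x + h * ρ' t x) - f (ρ t x)) / h ∂μ) (𝓝[≠] 0)
        (𝓝 (∫ x, deriv f (ρ t x) * ρ' t x ∂μ)) := by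
      refine tendsto_integral_filter_of_dominated_convergence (fun x => (L : ℝ) * |ρ' t x|)
        ?_ ?_ ((hint t ht).2.abs.const_mul _) ?_
      · filter_upwards with h
        have hm := ((hfc.comp_aestronglyMeasurable ((hint t ht).1.add
          ((hint t ht).2.const_mul h)).1).sub
          (hfc.comp_aestronglyMeasurable (hint t ht).1.1)).mul_const h⁻¹
        simpa [div_eq_mul_inv] using hm
      · filter_upwards [self_mem_nhdsWithin] with h hh
        have hh0 : h ≠ 0 := hh
        filter_upwards with x
        simp only [Real.norm_eq_abs, abs_div]
        rw [div_le_iff₀ (abs_pos.mpr hh0)]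
        have key : (L : ℝ) * |ρ' t x| * |h| = (L : ℝ) * |(ρ t x + h * ρ' t x) - ρ t x| := by
          rw [mul_assoc, ← abs_mul]
          congr 2
          ring
        rw [key]
        exact hLabs _ _
      · filter_upwards with x
        have h1 : HasDerivAt (fun h : ℝ => ρ t x + h * ρ' t x) (ρ' t x) 0 := by
          simpa using ((hasDerivAt_id (0:ℝ)).mul_const (ρ' t x)).const_add (ρ t x)
        have h2 : HasDerivAt f (deriv f (ρ t x)) (ρ t x) := (hdf _).hasDerivAt
        have h2' : HasDerivAt f (deriv f (ρ t x)) ((fun h : ℝ => ρ t x + h * ρ' t x) 0) := by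
          simpa using h2
        have hg : HasDerivAt (fun h : ℝ => f (ρ t x + h * ρ' t x))
            (deriv f (ρ t x) * ρ' t x) 0 := h2'.comp 0 h1
        have := hg.tendsto_slope_zero
        simp only [zero_add, zero_mul, add_zero, smul_eq_mul] at this
        refine this.congr fun h => ?_
        rw [inv_mul_eq_div]
    have heq : (fun h : ℝ =>
        (∫ x, (f (ρ (t + h) x) - f (ρ t x + h * ρ' t x)) / h ∂μ) +
        ∫ x, (f (ρ t x + h * ρ' t x) - f (ρ t x)) / h ∂μ)
        =ᶠ[𝓝[≠] (0:ℝ)]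
        (fun h : ℝ => h⁻¹ • ((∫ x, f (ρ (t + h) x) ∂μ) - ∫ x, f (ρ t x) ∂μ)) := by
      filter_upwards [hmem.filter_mono nhdsWithin_le_nhds, self_mem_nhdsWithin] with h h1 h2
      have hh0 : h ≠ 0 := h2
      have hshift : Integrable (fun x => ρ t x + h * ρ' t x) μ :=
        (hint t ht).1.add ((hint t ht).2.const_mul h)
      have hAint : Integrable (fun x => (f (ρ (t + h) x) - f (ρ t x + h * ρ' t x)) / h) μ :=
        ((hcomp _ (hint _ h1).1).sub (hcomp _ hshift)).div_const h
      have hBint : Integrable (fun x => (f (ρ t x + h * ρ' t x) - f (ρ t x)) / h) μ :=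
        ((hcomp _ hshift).sub (hcomp _ (hint t ht).1)).div_const h
      rw [← integral_add hAint hBint]
      rw [smul_eq_mul, ← integral_sub (hcomp _ (hint _ h1).1) (hcomp _ (hint t ht).1)]
      rw [← integral_const_mul]
      congr 1
      funext x
      field_simp
      ring
    have := Filter.Tendsto.congr' heq (hT1.add hT2)
    simpa using this
  -- frontier of I is null
  have hfr : volume (frontier I) = 0 :=
    Convex.addHaar_frontier volume (convex_iff_ordConnected.mpr hI)
  have h1 : ∀ᵐ t ∂(volume.restrict I), t ∉ frontier I :=
    ae_restrict_of_ae (measure_eq_zero_iff_ae_notMem.mp hfr)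
  have h2 : ∀ᵐ t ∂(volume.restrict I), t ∈ I :=
    ae_restrict_mem₀ (nullMeasurableSet_of_null_frontier hfr)
  filter_upwards [h1, h2] with t htf htI
  refine hkey t ?_
  by_contra hni
  exact htf ⟨subset_closure htI, hni⟩
end
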